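/- Conversely, if f_κ is majorized by a computable function h, then solvability in ℕ of any Diophantine equation with fewer than κ solutions is decidable: reduce D to an equivalent system S ⊆ E_n and check all candidate solutions with coordinates ≤ h(n); i.e., statement (b) implies statement (a) of Theorem 2. -/

import Mathlib

/-- An equation of one of the forms x_k = 1, x_i + x_j = x_k, x_i · x_j = x_k,
coded by the indices of its variables. -/
abbrev DEqn : Type := ℕ ⊕ (ℕ × ℕ × ℕ) ⊕ (ℕ × ℕ × ℕ)

/-- The equation coded by `e` holds under the valuation `v`. -/
def DEqn.holds (v : ℕ → ℕ) : DEqn → Prop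
  | Sum.inl k => v k = 1
  | Sum.inr (Sum.inl (i, j, k)) => v i + v j = v k
  | Sum.inr (Sum.inr (i, j, k)) => v i * v j = v k

/-- The equation `e` belongs to E_n, i.e., all its variable indices are among x_1,...,x_n
(0-indexed: < n). -/
def DEqn.inE (n : ℕ) : DEqn → Prop
  | Sum.inl k => k < n
  | Sum.inr (Sum.inl (i, j, k)) => i < n ∧ j < n ∧ k < n
  | Sum.inr (Sum.inr (i, j, k)) => i < n ∧ j < n ∧ k < n

/-- Extend a tuple x ∈ ℕⁿ to a valuation ℕ → ℕ (zero outside). -/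
def extVal (n : ℕ) (x : Fin n → ℕ) : ℕ → ℕ := fun i => if h : i < n then x ⟨i, h⟩ else 0

/-- The set of solutions in ℕⁿ of the system S. -/
def SolSet (n : ℕ) (S : Set DEqn) : Set (Fin n → ℕ) :=
  {x | ∀ e ∈ S, DEqn.holds (extVal n x) e}

/-- `b` is an admissible bound for n and κ: every system S ⊆ E_n which is solvable in ℕⁿ
and has fewer than κ solutions in ℕⁿ has a solution with all coordinates ≤ b.
(f_κ(n) is the least such b.) -/
def IsBound (κ : Cardinal) (n b : ℕ) : Prop :=
  ∀ S : Set DEqn, (∀ e ∈ S, DEqn.inE n e) → (SolSet n S).Nonempty →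
    Cardinal.mk (SolSet n S) < κ → ∃ x ∈ SolSet n S, ∀ i, x i ≤ b


/-- valuation from a packed (base, n, code) triple -/
def valB (c : ℕ × ℕ × ℕ) (i : ℕ) : ℕ :=
  if i < c.2.1 then c.2.2 / c.1 ^ i % c.1 else 0

def checkE (c : ℕ × ℕ × ℕ) : (ℕ ⊕ (ℕ × ℕ × ℕ) ⊕ (ℕ × ℕ × ℕ)) → Bool
  | Sum.inl k => valB c k == 1
  | Sum.inr (Sum.inl (i, j, k)) => valB c i + valB c j == valB c k
  | Sum.inr (Sum.inr (i, j, k)) => valB c i * valB c j == valB c k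

def Ffun (q : ℕ × ℕ × List (ℕ ⊕ (ℕ × ℕ × ℕ) ⊕ (ℕ × ℕ × ℕ))) : Bool :=
  (List.range (q.1 ^ q.2.1)).any fun m => q.2.2.all (checkE (q.1, q.2.1, m))

lemma foldr_or {α : Type*} (p : α → Bool) (l : List α) :
    l.foldr (fun x acc => p x || acc) false = l.any p := by
  induction l <;> simp [*]

lemma foldr_and {α : Type*} (p : α → Bool) (l : List α) :
    l.foldr (fun x acc => p x && acc) true = l.all p := by
  induction l <;> simp [*]

theorem pow_primrec : Primrec₂ (fun a b : ℕ => a ^ b) := by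
  have h : Primrec fun p : ℕ × ℕ => (fun x => x * p.1)^[p.2] 1 :=
    Primrec.nat_iterate Primrec.snd (Primrec.const 1)
      (Primrec.nat_mul.comp Primrec.snd (Primrec.fst.comp Primrec.fst))
  refine h.of_eq fun p => ?_
  induction p.2 with
  | zero => simp
  | succ k ih => simp [Function.iterate_succ_apply', ih, pow_succ]

theorem valB_primrec : Primrec₂ valB := by
  unfold valB
  exact Primrec.ite
    (Primrec.nat_lt.comp Primrec.snd ((Primrec.fst.comp Primrec.snd).comp Primrec.fst))
    (Primrec.nat_mod.comp
      (Primrec.nat_div.comp ((Primrec.snd.comp Primrec.snd).comp Primrec.fst)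
        (pow_primrec.comp (Primrec.fst.comp Primrec.fst) Primrec.snd))
      (Primrec.fst.comp Primrec.fst))
    (Primrec.const 0)

set_option maxHeartbeats 1000000 in
theorem checkE_primrec : Primrec₂ checkE := by
  have cpr : Primrec fun a : (((ℕ × ℕ × ℕ) × (ℕ ⊕ (ℕ × ℕ × ℕ) ⊕ (ℕ × ℕ × ℕ))) ×
      ((ℕ × ℕ × ℕ) ⊕ (ℕ × ℕ × ℕ))) × (ℕ × ℕ × ℕ) => a.1.1.1 :=
    Primrec.fst.comp (Primrec.fst.comp Primrec.fst)
  have main : Primrec fun p : (ℕ × ℕ × ℕ) × (ℕ ⊕ (ℕ × ℕ × ℕ) ⊕ (ℕ × ℕ × ℕ)) =>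
      Sum.casesOn (motive := fun _ => Bool) p.2 (fun k => (valB p.1 k == 1))
        (fun t => Sum.casesOn (motive := fun _ => Bool) t
          (fun r : ℕ × ℕ × ℕ => (valB p.1 r.1 + valB p.1 r.2.1 == valB p.1 r.2.2))
          (fun r : ℕ × ℕ × ℕ => (valB p.1 r.1 * valB p.1 r.2.1 == valB p.1 r.2.2))) := by
    apply Primrec.sumCasesOn Primrec.snd
    · exact Primrec.beq.comp
        (valB_primrec.comp (Primrec.fst.comp Primrec.fst) Primrec.snd) (Primrec.const 1)
    · apply Primrec.sumCasesOn Primrec.snd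
      · exact Primrec.beq.comp
          (Primrec.nat_add.comp
            (valB_primrec.comp cpr (Primrec.fst.comp Primrec.snd))
            (valB_primrec.comp cpr (Primrec.fst.comp (Primrec.snd.comp Primrec.snd))))
          (valB_primrec.comp cpr (Primrec.snd.comp (Primrec.snd.comp Primrec.snd)))
      · exact Primrec.beq.comp
          (Primrec.nat_mul.comp
            (valB_primrec.comp cpr (Primrec.fst.comp Primrec.snd))
            (valB_primrec.comp cpr (Primrec.fst.comp (Primrec.snd.comp Primrec.snd))))
          (valB_primrec.comp cpr (Primrec.snd.comp (Primrec.snd.comp Primrec.snd)))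
  refine main.of_eq ?_
  rintro ⟨c, (k | ⟨i, j, k⟩ | ⟨i, j, k⟩)⟩ <;> rfl

theorem allCheck_primrec :
    Primrec fun q : (ℕ × ℕ × ℕ) × List (ℕ ⊕ (ℕ × ℕ × ℕ) ⊕ (ℕ × ℕ × ℕ)) =>
      q.2.all (checkE q.1) := by
  have main := Primrec.list_foldr (α := (ℕ × ℕ × ℕ) × List (ℕ ⊕ (ℕ × ℕ × ℕ) ⊕ (ℕ × ℕ × ℕ)))
    (f := fun q => q.2) (g := fun _ => true)
    (h := fun a p => checkE a.1 p.1 && p.2) Primrec.snd (Primrec.const true)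
    (Primrec.and.comp
      (checkE_primrec.comp (Primrec.fst.comp Primrec.fst) (Primrec.fst.comp Primrec.snd))
      (Primrec.snd.comp Primrec.snd))
  refine main.of_eq fun q => ?_
  exact foldr_and (checkE q.1) q.2

theorem Ffun_primrec : Primrec Ffun := by
  have main := Primrec.list_foldr
    (α := ℕ × ℕ × List (ℕ ⊕ (ℕ × ℕ × ℕ) ⊕ (ℕ × ℕ × ℕ)))
    (f := fun a => List.range (a.1 ^ a.2.1)) (g := fun _ => false)
    (h := fun a p => a.2.2.all (checkE (a.1, a.2.1, p.1)) || p.2)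
    (Primrec.list_range.comp (pow_primrec.comp Primrec.fst (Primrec.fst.comp Primrec.snd)))
    (Primrec.const false)
    (Primrec.or.comp
      (allCheck_primrec.comp (Primrec.pair
        (Primrec.pair (Primrec.fst.comp Primrec.fst)
          (Primrec.pair (Primrec.fst.comp (Primrec.snd.comp Primrec.fst))
            (Primrec.fst.comp Primrec.snd)))
        (Primrec.snd.comp (Primrec.snd.comp Primrec.fst))))
      (Primrec.snd.comp Primrec.snd))
  refine main.of_eq fun a => ?_
  exact foldr_or (fun m => a.2.2.all (checkE (a.1, a.2.1, m))) (List.range (a.1 ^ a.2.1))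

lemma ofDigits_key (b : ℕ) (hb : 0 < b) : ∀ L : List ℕ, (∀ d ∈ L, d < b) →
    Nat.ofDigits b L < b ^ L.length ∧
      ∀ i, Nat.ofDigits b L / b ^ i % b = L.getD i 0 := by
  intro L
  induction L with
  | nil => intro _; simp [Nat.ofDigits]
  | cons d L ih =>
    intro hd
    obtain ⟨ih1, ih2⟩ := ih fun x hx => hd x (List.mem_cons_of_mem _ hx)
    have hdb : d < b := hd d List.mem_cons_self
    have hof : Nat.ofDigits b (d :: L) = d + b * Nat.ofDigits b L := by
      rw [Nat.ofDigits_cons]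
    set o := Nat.ofDigits b L with ho
    constructor
    · calc d + b * o < b + b * o := by omega
        _ = b * (o + 1) := by ring
        _ ≤ b * b ^ L.length := Nat.mul_le_mul_left _ ih1
        _ = b ^ (L.length + 1) := by ring
    · intro i
      cases i with
      | zero =>
        simp only [pow_zero, Nat.div_one, hof, List.getD_cons_zero]
        rw [Nat.add_mul_mod_self_left, Nat.mod_eq_of_lt hdb]
      | succ i =>
        have hdiv : (d + b * o) / b ^ (i + 1) = o / b ^ i := by
          rw [pow_succ', ← Nat.div_div_eq_div_mul, Nat.add_mul_div_left _ _ hb,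
            Nat.div_eq_of_lt hdb, Nat.zero_add]
        rw [hof, hdiv, ih2 i, List.getD_cons_succ]

lemma checkE_iff (c : ℕ × ℕ × ℕ) (e : DEqn) :
    checkE c e = true ↔ DEqn.holds (valB c) e := by
  rcases e with k | ⟨i, j, k⟩ | ⟨i, j, k⟩ <;> simp [checkE, DEqn.holds]


/-- (b) ⇒ (a) of Theorem 2: if f_κ is majorized by a computable h (i.e.,
h(n) is an admissible bound for each n), then there is an algorithm deciding, for every
system S ⊆ E_n with fewer than κ solutions in ℕⁿ, whether S is solvable in ℕⁿ. -/
theorem stmt_13 (κ : Cardinal) (hκ : 2 ≤ κ)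
    (h : ℕ → ℕ) (hcomp : Computable h) (hmaj : ∀ n, IsBound κ n (h n)) :
    ∃ A : ℕ × List DEqn → Bool, Computable A ∧
      ∀ n : ℕ, ∀ S : List DEqn, (∀ e ∈ S, DEqn.inE n e) →
        Cardinal.mk (SolSet n {e | e ∈ S}) < κ →
        (A (n, S) = true ↔ (SolSet n {e | e ∈ S}).Nonempty) := by
  refine ⟨fun p => Ffun (h p.1 + 1, p), ?_, ?_⟩
  · exact Ffun_primrec.to_comp.comp
      (Computable.pair (Computable.succ.comp (hcomp.comp Computable.fst)) Computable.id)
  · intro n S hE hcard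
    set b := h n + 1 with hbdef
    constructor
    · intro hA
      simp only [Ffun, List.any_eq_true, List.mem_range, List.all_eq_true] at hA
      obtain ⟨m, hm, hall⟩ := hA
      refine ⟨fun i => valB (b, n, m) (i : ℕ), ?_⟩
      have hv : extVal n (fun i => valB (b, n, m) (i : ℕ)) = valB (b, n, m) := by
        funext i
        by_cases hi : i < n
        · simp [extVal, hi]
        · simp [extVal, valB, hi]
      intro e he
      rw [hv]
      exact (checkE_iff _ _).mp (hall e he)
    · intro hne
      obtain ⟨x, hx, hbd⟩ := hmaj n {e | e ∈ S} hE hne hcard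
      have hlt : ∀ i, x i < b := fun i => Nat.lt_succ_of_le (hbd i)
      set L := List.ofFn x with hLdef
      have hL : ∀ d ∈ L, d < b := by
        intro d hd
        rw [hLdef, List.mem_ofFn] at hd
        obtain ⟨i, rfl⟩ := hd
        exact hlt i
      obtain ⟨hlen, hdig⟩ := ofDigits_key b (Nat.succ_pos _) L hL
      set m := Nat.ofDigits b L with hmdef
      have hmlt : m < b ^ n := by simpa [hLdef, List.length_ofFn] using hlen
      have hv : valB (b, n, m) = extVal n x := by
        funext i
        by_cases hi : i < n
        · have hget : L.getD i 0 = x ⟨i, hi⟩ := by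
            rw [List.getD_eq_getElem _ _ (by simpa [hLdef] using hi)]
            simp [hLdef]
          have : valB (b, n, m) i = L.getD i 0 := by
            simpa [valB, hi] using hdig i
          rw [this, hget]
          simp [extVal, hi]
        · simp [valB, extVal, hi]
      simp only [Ffun, List.any_eq_true, List.mem_range, List.all_eq_true]
      exact ⟨m, hmlt, fun e he => (checkE_iff _ _).mpr (by rw [hv]; exact hx e he)⟩
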